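/- arXiv:1606.04679 — 2 statements merged into one kernel-verified Lean document; each statement's English description precedes it below -/
import Mathlib

section
/- Let G = (V,E) be a biconnected outerplanar graph with at least three vertices, and let C be a chain in G with endpoints v1 and v2. Then the graph with edge set (E \ C) ∪ {{v1,v2}} (on the vertices that are endpoints of these edges) is biconnected and outerplanar. -/
open SimpleGraph

universe u₁ u₂

variable {V : Type u₁} {W : Type u₂}

/-- `H` is a minor of `G`: there is a branch decomposition, i.e. a partial map
assigning to some vertices of `G` a vertex of `H`, whose branch sets are
nonempty and connected, and such that every edge of `H` is realized by an
edge of `G` between the corresponding branch sets. -/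
def IsMinorOf (H : SimpleGraph W) (G : SimpleGraph V) : Prop :=
  ∃ f : V → Option W,
    (∀ w : W, (G.induce {v | f v = some w}).Connected) ∧
    (∀ w₁ w₂ : W, H.Adj w₁ w₂ →
      ∃ v₁ v₂ : V, f v₁ = some w₁ ∧ f v₂ = some w₂ ∧ G.Adj v₁ v₂)

/-- The cone over `G`: add a new apex vertex adjacent to all vertices of `G`. -/
def cone (G : SimpleGraph V) : SimpleGraph (Option V) :=
  SimpleGraph.fromRel (fun a b =>
    a = none ∨ ∃ u v : V, a = some u ∧ b = some v ∧ G.Adj u v)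

/-- A graph is planar iff it has neither a `K₅` nor a `K₃,₃` minor (Wagner). -/
def Planar (G : SimpleGraph V) : Prop :=
  ¬ IsMinorOf (⊤ : SimpleGraph (Fin 5)) G ∧
  ¬ IsMinorOf (completeBipartiteGraph (Fin 3) (Fin 3)) G

/-- A graph is outerplanar iff the cone over it is planar (equivalently, it
has a planar embedding with all vertices on the outer face). -/
def Outerplanar (G : SimpleGraph V) : Prop := Planar (cone G)

/-- `v` is a cut vertex of `G`: `G` is connected but deleting `v` disconnects it. -/
def IsCutVertex (G : SimpleGraph V) (v : V) : Prop :=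
  G.Connected ∧ ¬ (G.induce {u | u ≠ v}).Connected

/-- `G` is biconnected: connected with no cut vertex. -/
def Biconnected (G : SimpleGraph V) : Prop :=
  G.Connected ∧ ∀ v : V, ¬ IsCutVertex G v

/-- Degree of a vertex, as the cardinality of its neighbour set. -/
noncomputable def deg (G : SimpleGraph V) (v : V) : ℕ := (G.neighborSet v).ncard

/-- Two `a`-`b` walks are internally vertex-disjoint if they share no
vertices other than `a` and `b`. -/
def InternallyDisjoint {G : SimpleGraph V} {a b : V} (p q : G.Walk a b) : Prop :=
  ∀ w : V, w ∈ p.support → w ∈ q.support → w = a ∨ w = b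

/-- A chain of `G` with endpoints `a` and `b`, represented by the path `p`
from `a` to `b`: all internal vertices have degree two, and either both
endpoints have degree greater than two (a path chain), or the chain is a
cycle of degree-two vertices, represented by a Hamiltonian-on-its-support
path between two adjacent vertices `a` and `b` of the cycle. -/
def IsGraphChain (G : SimpleGraph V) {a b : V} (p : G.Walk a b) : Prop :=
  p.IsPath ∧ 2 ≤ p.length ∧
    (∀ v ∈ p.support, v ≠ a → v ≠ b → deg G v = 2) ∧
    ((2 < deg G a ∧ 2 < deg G b) ∨
      (G.Adj a b ∧ ∀ v ∈ p.support, deg G v = 2))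

/-- The graph on the endpoints of the edges in `E'`, with edge set `E'`. -/
def graphOn (E' : Set (Sym2 V)) :
    SimpleGraph {v : V | ∃ e ∈ E', v ∈ e} :=
  (SimpleGraph.fromEdgeSet E').induce {v : V | ∃ e ∈ E', v ∈ e}


universe u₃
variable {U : Type u₃}

lemma walk_induce_reach {G : SimpleGraph V} {T : Set V} :
    ∀ {a b : V} (w : G.Walk a b) (ha : a ∈ T) (hb : b ∈ T),
      (∀ v ∈ w.support, v ∈ T) → (G.induce T).Reachable ⟨a, ha⟩ ⟨b, hb⟩ := by
  intro a b w
  induction w with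
  | nil => intro ha hb _; exact Reachable.refl _
  | @cons a c b h w ih =>
    intro ha hb hs
    have hc : c ∈ T := hs c (by simp [SimpleGraph.Walk.support_cons])
    refine Reachable.trans (SimpleGraph.Adj.reachable (?_ : (G.induce T).Adj ⟨a, ha⟩ ⟨c, hc⟩))
      (ih hc hb ?_)
    · exact h
    · intro v hv; exact hs v (by simp [SimpleGraph.Walk.support_cons, hv])

lemma walk_induce_induce_reach {G : SimpleGraph V} {T : Set V} {U : Set T} :
    ∀ {a b : V} (w : G.Walk a b) (ha : a ∈ T) (ha' : (⟨a, ha⟩ : T) ∈ U)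
      (hb : b ∈ T) (hb' : (⟨b, hb⟩ : T) ∈ U),
      (∀ v ∈ w.support, ∃ hv : v ∈ T, (⟨v, hv⟩ : T) ∈ U) →
      ((G.induce T).induce U).Reachable ⟨⟨a, ha⟩, ha'⟩ ⟨⟨b, hb⟩, hb'⟩ := by
  intro a b w
  induction w with
  | nil => intro ha ha' hb hb' _; exact Reachable.refl _
  | @cons a c b h w ih =>
    intro ha ha' hb hb' hs
    obtain ⟨hc, hc'⟩ := hs c (by simp [SimpleGraph.Walk.support_cons])
    refine Reachable.trans (SimpleGraph.Adj.reachable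
      (?_ : ((G.induce T).induce U).Adj ⟨⟨a, ha⟩, ha'⟩ ⟨⟨c, hc⟩, hc'⟩)) (ih hc hc' hb hb' ?_)
    · exact h
    · intro v hv; exact hs v (by simp [SimpleGraph.Walk.support_cons, hv])

lemma walk_of_induce {G : SimpleGraph V} {T : Set V} {x y : T}
    (w : (G.induce T).Walk x y) :
    ∃ w' : G.Walk x.1 y.1, ∀ v ∈ w'.support, v ∈ T := by
  let φ : G.induce T →g G := ⟨Subtype.val, fun {a b} h => h⟩
  refine ⟨w.map φ, ?_⟩
  intro v hv
  rw [SimpleGraph.Walk.support_map] at hv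
  obtain ⟨u, _, rfl⟩ := List.mem_map.1 hv
  exact u.2


lemma reach_of_connected_induce_subset {C : SimpleGraph V} {A B : Set V}
    (hAB : A ⊆ B) (hconn : (C.induce A).Connected) {c c' : V}
    (hc : c ∈ A) (hc' : c' ∈ A) :
    (C.induce B).Reachable ⟨c, hAB hc⟩ ⟨c', hAB hc'⟩ := by
  have h := hconn.preconnected ⟨c, hc⟩ ⟨c', hc'⟩
  let φ : C.induce A →g C.induce B := ⟨fun d => ⟨d.1, hAB d.2⟩, fun {a b} h => h⟩
  exact h.map φ

lemma IsMinorOf.trans {A : SimpleGraph U} {B : SimpleGraph W} {C : SimpleGraph V}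
    (hAB : IsMinorOf A B) (hBC : IsMinorOf B C) : IsMinorOf A C := by
  obtain ⟨g, hgconn, hgedge⟩ := hAB
  obtain ⟨f, hfconn, hfedge⟩ := hBC
  refine ⟨fun v => (f v).bind g, ?_, ?_⟩
  · intro a
    set Ua : Set V := {v | (f v).bind g = some a} with hUa
    have hmem : ∀ {v : V} {b : W}, f v = some b → g b = some a → v ∈ Ua := by
      intro v b h1 h2; simp only [hUa, Set.mem_setOf_eq, h1, Option.bind_some]; exact h2
    set T : Set W := {b | g b = some a} with hT
    -- key: reachability within induce Ua between branch sets
    have key : ∀ {x y : T} (w : (B.induce T).Walk x y) (cc cc' : ↥Ua),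
        f cc.1 = some x.1 → f cc'.1 = some y.1 →
        (C.induce Ua).Reachable cc cc' := by
      intro x y w
      induction w with
      | nil =>
        rename_i x
        intro cc cc' h1 h2
        exact reach_of_connected_induce_subset
          (fun d (hd : f d = some x.1) => hmem hd x.2) (hfconn x.1) h1 h2
      | @cons x z y hadj w ih =>
        intro cc cc' h1 h2
        have hBadj : B.Adj x.1 z.1 := hadj
        obtain ⟨d, d', hd, hd', hCdd'⟩ := hfedge x.1 z.1 hBadj
        have r1 : (C.induce Ua).Reachable cc ⟨d, hmem hd x.2⟩ :=
          reach_of_connected_induce_subset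
            (fun e (he : f e = some x.1) => hmem he x.2) (hfconn x.1) h1 hd
        have r2 : (C.induce Ua).Reachable ⟨d, hmem hd x.2⟩ ⟨d', hmem hd' z.2⟩ :=
          SimpleGraph.Adj.reachable (by exact hCdd')
        exact (r1.trans r2).trans (ih ⟨d', hmem hd' z.2⟩ cc' hd' h2)
    -- Connected
    rw [SimpleGraph.connected_iff]
    refine ⟨?_, ?_⟩
    · intro x y
      obtain ⟨b, hb, hgb⟩ : ∃ b, f x.1 = some b ∧ g b = some a := by
        have hx2 : (f x.1).bind g = some a := x.2
        cases h : f x.1 with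
        | none => rw [h] at hx2; simp at hx2
        | some b => rw [h] at hx2; exact ⟨b, rfl, hx2⟩
      obtain ⟨b', hb', hgb'⟩ : ∃ b', f y.1 = some b' ∧ g b' = some a := by
        have hy2 : (f y.1).bind g = some a := y.2
        cases h : f y.1 with
        | none => rw [h] at hy2; simp at hy2
        | some b => rw [h] at hy2; exact ⟨b, rfl, hy2⟩
      have hconnT := hgconn a
      have hw := hconnT.preconnected ⟨b, hgb⟩ ⟨b', hgb'⟩
      obtain ⟨w⟩ := hw
      exact key (x := ⟨b, hgb⟩) (y := ⟨b', hgb'⟩) w x y hb hb'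
    · -- Nonempty
      have hconnT := hgconn a
      obtain ⟨⟨b, hgb⟩⟩ := hconnT.nonempty
      have := (hfconn b).nonempty
      obtain ⟨⟨c, hc⟩⟩ := this
      exact ⟨⟨c, hmem hc hgb⟩⟩
  · intro a₁ a₂ hadj
    obtain ⟨b₁, b₂, hb₁, hb₂, hBadj⟩ := hgedge a₁ a₂ hadj
    obtain ⟨c₁, c₂, hc₁, hc₂, hCadj⟩ := hfedge b₁ b₂ hBadj
    exact ⟨c₁, c₂, by simp [hc₁, hb₁], by simp [hc₂, hb₂], hCadj⟩

lemma cone_adj {G : SimpleGraph V} {a b : Option V} :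
    (cone G).Adj a b ↔ a ≠ b ∧ (a = none ∨ b = none ∨
      ∃ u v : V, a = some u ∧ b = some v ∧ G.Adj u v) := by
  unfold cone
  rw [SimpleGraph.fromRel_adj]
  constructor
  · rintro ⟨hne, h | h⟩
    · rcases h with h | ⟨u, v, h1, h2, h3⟩
      · exact ⟨hne, Or.inl h⟩
      · exact ⟨hne, Or.inr (Or.inr ⟨u, v, h1, h2, h3⟩)⟩
    · rcases h with h | ⟨u, v, h1, h2, h3⟩
      · exact ⟨hne, Or.inr (Or.inl h)⟩
      · exact ⟨hne, Or.inr (Or.inr ⟨v, u, h2, h1, h3.symm⟩)⟩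
  · rintro ⟨hne, h | h | ⟨u, v, h1, h2, h3⟩⟩
    · exact ⟨hne, Or.inl (Or.inl h)⟩
    · exact ⟨hne, Or.inr (Or.inl h)⟩
    · exact ⟨hne, Or.inl (Or.inr ⟨u, v, h1, h2, h3⟩)⟩

lemma cone_minor {H : SimpleGraph W} {G : SimpleGraph V}
    (h : IsMinorOf H G) : IsMinorOf (cone H) (cone G) := by
  obtain ⟨f, hconn, hedge⟩ := h
  refine ⟨fun a => match a with
    | none => some none
    | some v => (f v).map some, ?_, ?_⟩
  · intro w
    cases w with
    | none =>
      -- branch set is {none}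
      have hset : {a : Option V | (match a with
          | none => some none
          | some v => (f v).map some) = some none} = {none} := by
        ext a
        cases a with
        | none => simp
        | some v =>
          simp only [Set.mem_setOf_eq, Set.mem_singleton_iff]
          constructor
          · intro hh
            cases hfv : f v with
            | none => rw [hfv] at hh; simp at hh
            | some w => rw [hfv] at hh; simp at hh
          · intro hh; simp at hh
      rw [hset]
      rw [SimpleGraph.connected_iff]
      refine ⟨?_, ⟨⟨none, rfl⟩⟩⟩
      intro x y
      have : x = y := Subtype.ext (x.2.trans y.2.symm)
      rw [this]
    | some w =>
      -- branch set is some '' branch set of w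
      have hcw := hconn w
      rw [SimpleGraph.connected_iff]
      constructor
      · rintro ⟨x, hx⟩ ⟨y, hy⟩
        -- x = some u with f u = some w
        obtain ⟨u, rfl, hu⟩ : ∃ u : V, x = some u ∧ f u = some w := by
          cases x with
          | none => simp at hx
          | some u =>
            refine ⟨u, rfl, ?_⟩
            simp only [Set.mem_setOf_eq] at hx
            cases hfu : f u with
            | none => rw [hfu] at hx; simp at hx
            | some w' => rw [hfu] at hx; simp at hx; rw [hx]
        obtain ⟨u', rfl, hu'⟩ : ∃ u' : V, y = some u' ∧ f u' = some w := by
          cases y with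
          | none => simp at hy
          | some u =>
            refine ⟨u, rfl, ?_⟩
            simp only [Set.mem_setOf_eq] at hy
            cases hfu : f u with
            | none => rw [hfu] at hy; simp at hy
            | some w' => rw [hfu] at hy; simp at hy; rw [hy]
        have r := hcw.preconnected ⟨u, hu⟩ ⟨u', hu'⟩
        let φ : G.induce {v | f v = some w} →g
            (cone G).induce {a : Option V | (match a with
              | none => some none
              | some v => (f v).map some) = some (some w)} :=
          ⟨fun d => ⟨some d.1, by simp only [Set.mem_setOf_eq]; rw [d.2]; rfl⟩,
           by
            intro d d' hdd'
            have hGdd' : G.Adj d.1 d'.1 := hdd'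
            show (cone G).Adj (some d.1) (some d'.1)
            rw [cone_adj]
            exact ⟨by simp [hGdd'.ne], Or.inr (Or.inr ⟨d.1, d'.1, rfl, rfl, hGdd'⟩)⟩⟩
        have := r.map φ
        exact this
      · obtain ⟨⟨u, hu⟩⟩ := (hconn w).nonempty
        exact ⟨⟨some u, by simp only [Set.mem_setOf_eq]; rw [hu]; rfl⟩⟩
  · intro w₁ w₂ hadj
    rw [cone_adj] at hadj
    obtain ⟨hne, h⟩ := hadj
    rcases h with rfl | rfl | ⟨u, v, rfl, rfl, hHuv⟩
    · -- w₁ = none, w₂ = some ?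
      cases w₂ with
      | none => exact absurd rfl hne
      | some w =>
        obtain ⟨⟨u, hu⟩⟩ := (hconn w).nonempty
        refine ⟨none, some u, rfl, by simp only; rw [hu]; rfl, ?_⟩
        rw [cone_adj]
        exact ⟨by simp, Or.inl rfl⟩
    · cases w₁ with
      | none => exact absurd rfl hne
      | some w =>
        obtain ⟨⟨u, hu⟩⟩ := (hconn w).nonempty
        refine ⟨some u, none, by simp only; rw [hu]; rfl, rfl, ?_⟩
        rw [cone_adj]
        exact ⟨by simp, Or.inr (Or.inl rfl)⟩
    · obtain ⟨a, b, ha, hb, hGab⟩ := hedge u v hHuv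
      refine ⟨some a, some b, by simp only; rw [ha]; rfl, by simp only; rw [hb]; rfl, ?_⟩
      rw [cone_adj]
      exact ⟨by simp [hGab.ne], Or.inr (Or.inr ⟨a, b, rfl, rfl, hGab⟩)⟩

set_option linter.unusedSectionVars false
section Chain

variable [Fintype V] [DecidableEq V] {G : SimpleGraph V} {v₁ v₂ : V} {p : G.Walk v₁ v₂}

/-- internal vertices of the chain -/
def chainInt (p : G.Walk v₁ v₂) : Set V := {v | v ∈ p.support ∧ v ≠ v₁ ∧ v ≠ v₂}

lemma chain_ne (hp : IsGraphChain G p) : v₁ ≠ v₂ := by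
  intro h
  subst h
  have h1 := hp.1
  have h2 := hp.2.1
  rw [SimpleGraph.Walk.isPath_iff_eq_nil] at h1
  subst h1
  simp at h2

lemma fact1 (hp : IsGraphChain G p) {v x : V} (hv : v ∈ p.support)
    (h1 : v ≠ v₁) (h2 : v ≠ v₂) (hadj : G.Adj v x) : s(v, x) ∈ p.edges := by
  obtain ⟨hpath, hlen, hdeg, _⟩ := hp
  have hq : ¬ (p.takeUntil v hv).reverse.Nil :=
    SimpleGraph.Walk.not_nil_of_ne h1
  obtain ⟨a', ha', q', hq'⟩ := SimpleGraph.Walk.not_nil_iff.1 hq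
  have hr : ¬ (p.dropUntil v hv).Nil := SimpleGraph.Walk.not_nil_of_ne h2
  obtain ⟨b', hb', r', hr'⟩ := SimpleGraph.Walk.not_nil_iff.1 hr
  have hea : s(v, a') ∈ p.edges := by
    apply SimpleGraph.Walk.edges_takeUntil_subset p hv
    have : s(v, a') ∈ (p.takeUntil v hv).reverse.edges := by
      rw [hq']; simp [SimpleGraph.Walk.edges_cons]
    rwa [SimpleGraph.Walk.edges_reverse, List.mem_reverse] at this
  have heb : s(v, b') ∈ p.edges := by
    apply SimpleGraph.Walk.edges_dropUntil_subset p hv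
    rw [hr']; simp [SimpleGraph.Walk.edges_cons]
  have hasupp : a' ∈ (p.takeUntil v hv).support := by
    have : a' ∈ (p.takeUntil v hv).reverse.support := by
      rw [hq', SimpleGraph.Walk.support_cons]
      exact List.mem_cons_of_mem _ q'.start_mem_support
    rwa [SimpleGraph.Walk.support_reverse, List.mem_reverse] at this
  have hbsupp : b' ∈ (p.dropUntil v hv).support.tail := by
    rw [hr', SimpleGraph.Walk.support_cons]
    exact r'.start_mem_support
  have hnd : ((p.takeUntil v hv).support ++ (p.dropUntil v hv).support.tail).Nodup := by
    rw [← SimpleGraph.Walk.support_append, SimpleGraph.Walk.take_spec p hv]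
    exact hpath.support_nodup
  have hab : a' ≠ b' := by
    intro h
    subst h
    exact (List.nodup_append.1 hnd).2.2 _ hasupp _ hbsupp rfl
  have hdv : deg G v = 2 := hdeg v hv h1 h2
  have hsub : {a', b'} ⊆ G.neighborSet v := by
    intro z hz
    rcases hz with rfl | hz
    · exact ha'
    · rw [Set.mem_singleton_iff] at hz; subst hz; exact hb'
  have heq : {a', b'} = G.neighborSet v :=
    Set.eq_of_subset_of_ncard_le hsub
      (by rw [Set.ncard_pair hab]; exact le_of_eq hdv) (Set.toFinite _)
  have hx : x ∈ G.neighborSet v := hadj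
  rw [← heq] at hx
  rcases hx with rfl | hx
  · exact hea
  · rw [Set.mem_singleton_iff] at hx; subst hx; exact heb

lemma edge_v1v2_not_mem (hp : IsGraphChain G p) : s(v₁, v₂) ∉ p.edges := by
  intro hmem
  have hne := chain_ne hp
  obtain ⟨hpath, hlen, -, -⟩ := hp
  have hq : ¬ p.Nil := SimpleGraph.Walk.not_nil_of_ne hne
  obtain ⟨u, hu, q, hq'⟩ := SimpleGraph.Walk.not_nil_iff.1 hq
  subst hq'
  rw [SimpleGraph.Walk.edges_cons] at hmem
  rcases List.mem_cons.1 hmem with h | h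
  · -- s(v₁,v₂) = s(v₁,u) : u = v₂
    have hu2 : u = v₂ := by
      rw [Sym2.eq_iff] at h
      rcases h with ⟨h1, h2⟩ | ⟨h1, h2⟩
      · exact h2.symm
      · exact absurd h2.symm hne
    subst hu2
    -- q : Walk v₂ v₂ is a path piece; since cons is a path, q must be nil
    have : q.IsPath := by
      have := hpath
      rw [SimpleGraph.Walk.cons_isPath_iff] at this
      exact this.1
    rw [SimpleGraph.Walk.isPath_iff_eq_nil] at this
    subst this
    simp [SimpleGraph.Walk.length_cons] at hlen
  · -- v₁ ∈ q.support, contradicting path nodup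
    have hv₁ : v₁ ∈ q.support := SimpleGraph.Walk.fst_mem_support_of_mem_edges q h
    rw [SimpleGraph.Walk.cons_isPath_iff] at hpath
    exact hpath.2 hv₁

lemma lemmaC (hp : IsGraphChain G p) :
    ∀ {z y : V} (w : G.Walk z y), z ∈ chainInt p → y ∉ chainInt p →
      v₁ ∈ w.support ∨ v₂ ∈ w.support := by
  intro z y w
  induction w with
  | nil => intro hz hy; exact absurd hz hy
  | @cons z t y h w ih =>
    intro hz hy
    have hedge : s(z, t) ∈ p.edges := fact1 hp hz.1 hz.2.1 hz.2.2 h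
    have ht : t ∈ p.support := SimpleGraph.Walk.snd_mem_support_of_mem_edges p hedge
    by_cases htI : t ∈ chainInt p
    · rcases ih htI hy with h1 | h1
      · left; rw [SimpleGraph.Walk.support_cons]; exact List.mem_cons_of_mem _ h1
      · right; rw [SimpleGraph.Walk.support_cons]; exact List.mem_cons_of_mem _ h1
    · have htv : t = v₁ ∨ t = v₂ := by
        by_contra hc
        push_neg at hc
        exact htI ⟨ht, hc.1, hc.2⟩
      rcases htv with rfl | rfl
      · left; rw [SimpleGraph.Walk.support_cons]
        exact List.mem_cons_of_mem _ w.start_mem_support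
      · right; rw [SimpleGraph.Walk.support_cons]
        exact List.mem_cons_of_mem _ w.start_mem_support

lemma not_chainInt_of_eq₁ : v₁ ∉ chainInt p := fun hm => hm.2.1 rfl

lemma not_chainInt_of_eq₂ : v₂ ∉ chainInt p := fun hm => hm.2.2 rfl

lemma lemmaA (hp : IsGraphChain G p) {E' : Set (Sym2 V)}
    (hE1 : ∀ e ∈ G.edgeSet, e ∉ p.edges → e ∈ E') (hE2 : s(v₁, v₂) ∈ E') :
    ∀ (n : ℕ) {x y : V} (w : G.Walk x y), w.length ≤ n →
      x ∉ chainInt p → y ∉ chainInt p →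
      ∃ q : (SimpleGraph.fromEdgeSet E').Walk x y,
        ∀ v ∈ q.support, v ∈ w.support ∧ v ∉ chainInt p := by
  intro n
  induction n with
  | zero =>
    intro x y w hlen hx hy
    cases w with
    | nil =>
      refine ⟨SimpleGraph.Walk.nil, ?_⟩
      intro v hv
      rw [SimpleGraph.Walk.support_nil, List.mem_singleton] at hv
      subst hv
      exact ⟨SimpleGraph.Walk.start_mem_support _, hx⟩
    | cons h w' => rw [SimpleGraph.Walk.length_cons] at hlen; omega
  | succ n ih =>
    intro x y w hlen hx hy
    cases w with
    | nil =>
      refine ⟨SimpleGraph.Walk.nil, ?_⟩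
      intro v hv
      rw [SimpleGraph.Walk.support_nil, List.mem_singleton] at hv
      subst hv
      exact ⟨SimpleGraph.Walk.start_mem_support _, hx⟩
    | @cons _ z _ h w' =>
      rw [SimpleGraph.Walk.length_cons] at hlen
      by_cases hzI : z ∈ chainInt p
      · have hc := lemmaC hp w' hzI hy
        have hzx : s(z, x) ∈ p.edges := fact1 hp hzI.1 hzI.2.1 hzI.2.2 h.symm
        have hxp : x ∈ p.support := SimpleGraph.Walk.snd_mem_support_of_mem_edges p hzx
        have hxv : x = v₁ ∨ x = v₂ := by
          by_contra hcon
          push_neg at hcon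
          exact hx ⟨hxp, hcon.1, hcon.2⟩
        obtain ⟨c, hcv, hcs⟩ : ∃ c, (c = v₁ ∨ c = v₂) ∧ c ∈ w'.support := by
          rcases hc with h1 | h1
          · exact ⟨v₁, Or.inl rfl, h1⟩
          · exact ⟨v₂, Or.inr rfl, h1⟩
        have hcI : c ∉ chainInt p := by
          rcases hcv with rfl | rfl
          · exact not_chainInt_of_eq₁
          · exact not_chainInt_of_eq₂
        have hlen'' : (w'.dropUntil c hcs).length ≤ n :=
          le_trans (SimpleGraph.Walk.length_dropUntil_le w' hcs) (by omega)
        obtain ⟨q'', hq''⟩ := ih (w'.dropUntil c hcs) hlen'' hcI hy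
        have hsub : ∀ v ∈ (w'.dropUntil c hcs).support, v ∈ w'.support :=
          fun v hv => SimpleGraph.Walk.support_dropUntil_subset w' hcs hv
        by_cases hxc : x = c
        · subst hxc
          refine ⟨q'', ?_⟩
          intro v hv
          obtain ⟨h1, h2⟩ := hq'' v hv
          refine ⟨?_, h2⟩
          rw [SimpleGraph.Walk.support_cons]
          exact List.mem_cons_of_mem _ (hsub v h1)
        · have hadj : (SimpleGraph.fromEdgeSet E').Adj x c := by
            rw [SimpleGraph.fromEdgeSet_adj]
            refine ⟨?_, hxc⟩
            rcases hxv with rfl | rfl <;> rcases hcv with rfl | rfl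
            · exact absurd rfl hxc
            · exact hE2
            · rw [Sym2.eq_swap]; exact hE2
            · exact absurd rfl hxc
          refine ⟨SimpleGraph.Walk.cons hadj q'', ?_⟩
          intro v hv
          rw [SimpleGraph.Walk.support_cons] at hv
          rcases List.mem_cons.1 hv with rfl | hv'
          · exact ⟨SimpleGraph.Walk.start_mem_support _, hx⟩
          · obtain ⟨h1, h2⟩ := hq'' v hv'
            refine ⟨?_, h2⟩
            rw [SimpleGraph.Walk.support_cons]
            exact List.mem_cons_of_mem _ (hsub v h1)
      · have hxzE : s(x, z) ∈ E' := by
          apply hE1 _ h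
          intro hmem
          have hxs : x ∈ p.support := SimpleGraph.Walk.fst_mem_support_of_mem_edges p hmem
          have hzs : z ∈ p.support := SimpleGraph.Walk.snd_mem_support_of_mem_edges p hmem
          have hxv : x = v₁ ∨ x = v₂ := by
            by_contra hcon; push_neg at hcon; exact hx ⟨hxs, hcon.1, hcon.2⟩
          have hzv : z = v₁ ∨ z = v₂ := by
            by_contra hcon; push_neg at hcon; exact hzI ⟨hzs, hcon.1, hcon.2⟩
          apply edge_v1v2_not_mem hp
          rcases hxv with rfl | rfl <;> rcases hzv with rfl | rfl
          · exact absurd rfl h.ne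
          · exact hmem
          · rwa [Sym2.eq_swap] at hmem
          · exact absurd rfl h.ne
        have hadj : (SimpleGraph.fromEdgeSet E').Adj x z :=
          (SimpleGraph.fromEdgeSet_adj E').2 ⟨hxzE, h.ne⟩
        obtain ⟨q', hq'⟩ := ih w' (by omega) hzI hy
        refine ⟨SimpleGraph.Walk.cons hadj q', ?_⟩
        intro v hv
        rw [SimpleGraph.Walk.support_cons] at hv
        rcases List.mem_cons.1 hv with rfl | hv'
        · exact ⟨SimpleGraph.Walk.start_mem_support _, hx⟩
        · obtain ⟨h1, h2⟩ := hq' v hv'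
          refine ⟨?_, h2⟩
          rw [SimpleGraph.Walk.support_cons]
          exact List.mem_cons_of_mem _ h1

lemma induce_singleton_connected (G : SimpleGraph V) (a : V) :
    (G.induce {a}).Connected := by
  rw [SimpleGraph.connected_iff]
  refine ⟨?_, ⟨⟨a, rfl⟩⟩⟩
  intro x y
  have : x = y := Subtype.ext (x.2.trans y.2.symm)
  rw [this]

lemma support_walk_mem_S {E' : Set (Sym2 V)} :
    ∀ {x y : V} (q : (SimpleGraph.fromEdgeSet E').Walk x y),
      x ∈ {v : V | ∃ e ∈ E', v ∈ e} →
      ∀ v ∈ q.support, v ∈ {v : V | ∃ e ∈ E', v ∈ e} := by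
  intro x y q
  induction q with
  | nil =>
    intro hx v hv
    rw [SimpleGraph.Walk.support_nil, List.mem_singleton] at hv
    subst hv; exact hx
  | @cons x z y h q ih =>
    intro hx v hv
    have he := (SimpleGraph.fromEdgeSet_adj E').1 h
    have hz : z ∈ {v : V | ∃ e ∈ E', v ∈ e} := ⟨s(x, z), he.1, Sym2.mem_mk_right x z⟩
    rw [SimpleGraph.Walk.support_cons] at hv
    rcases List.mem_cons.1 hv with rfl | hv'
    · exact hx
    · exact ih hz v hv'

lemma S_disjoint_chainInt (hp : IsGraphChain G p) {v : V} (hv : v ∈ chainInt p) :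
    v ∉ {v : V | ∃ e ∈ (G.edgeSet \ {e | e ∈ p.edges}) ∪ {s(v₁, v₂)}, v ∈ e} := by
  rintro ⟨e, he, hve⟩
  rcases he with ⟨heG, hep⟩ | he
  · obtain ⟨b, rfl⟩ := Sym2.mem_iff_exists.1 hve
    exact hep (fact1 hp hv.1 hv.2.1 hv.2.2 ((SimpleGraph.mem_edgeSet G).1 heG))
  · rw [Set.mem_singleton_iff] at he
    subst he
    rcases Sym2.mem_iff.1 hve with rfl | rfl
    · exact hv.2.1 rfl
    · exact hv.2.2 rfl

lemma induce_support_front_connected (hp : IsGraphChain G p) :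
    (G.induce {v | v ∈ p.support ∧ v ≠ v₂}).Connected := by
  have hne := chain_ne hp
  rw [SimpleGraph.connected_iff]
  have hbase : v₁ ∈ {v | v ∈ p.support ∧ v ≠ v₂} := ⟨p.start_mem_support, hne⟩
  refine ⟨?_, ⟨⟨v₁, hbase⟩⟩⟩
  have key : ∀ x : {v | v ∈ p.support ∧ v ≠ v₂},
      (G.induce {v | v ∈ p.support ∧ v ≠ v₂}).Reachable ⟨v₁, hbase⟩ x := by
    intro x
    have hx1 : x.1 ∈ p.support := x.2.1
    have hv₂ : v₂ ∉ (p.takeUntil x.1 hx1).support := by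
      intro hmem
      have hnd : ((p.takeUntil x.1 hx1).support ++
          (p.dropUntil x.1 hx1).support.tail).Nodup := by
        rw [← SimpleGraph.Walk.support_append, SimpleGraph.Walk.take_spec p hx1]
        exact hp.1.support_nodup
      have hv₂d : v₂ ∈ (p.dropUntil x.1 hx1).support :=
        (p.dropUntil x.1 hx1).end_mem_support
      have : v₂ ∈ (p.dropUntil x.1 hx1).support.tail := by
        have hsc : (p.dropUntil x.1 hx1).support =
            x.1 :: (p.dropUntil x.1 hx1).support.tail :=
          SimpleGraph.Walk.support_eq_cons _
        rw [hsc] at hv₂d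
        rcases List.mem_cons.1 hv₂d with h | h
        · exact absurd h.symm x.2.2
        · exact h
      exact (List.nodup_append.1 hnd).2.2 _ hmem _ this rfl
    have hsupp : ∀ v ∈ (p.takeUntil x.1 hx1).support, v ∈ {v | v ∈ p.support ∧ v ≠ v₂} := by
      intro v hv
      refine ⟨SimpleGraph.Walk.support_takeUntil_subset p hx1 hv, ?_⟩
      intro h; subst h; exact hv₂ hv
    exact walk_induce_reach (p.takeUntil x.1 hx1) hbase x.2 hsupp
  intro x y
  exact (key x).symm.trans (key y)

lemma newG_minor (hp : IsGraphChain G p) :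
    IsMinorOf (graphOn ((G.edgeSet \ {e | e ∈ p.edges}) ∪ {s(v₁, v₂)})) G := by
  classical
  have hne := chain_ne hp
  set E' : Set (Sym2 V) := (G.edgeSet \ {e | e ∈ p.edges}) ∪ {s(v₁, v₂)} with hE'
  have hv₁S : v₁ ∈ {v : V | ∃ e ∈ E', v ∈ e} :=
    ⟨s(v₁, v₂), Or.inr rfl, Sym2.mem_mk_left _ _⟩
  have hv₂S : v₂ ∈ {v : V | ∃ e ∈ E', v ∈ e} :=
    ⟨s(v₁, v₂), Or.inr rfl, Sym2.mem_mk_right _ _⟩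
  set f : V → Option {v : V | ∃ e ∈ E', v ∈ e} := fun v =>
    if h : v ∈ p.support ∧ v ≠ v₂ then some ⟨v₁, hv₁S⟩
    else if h2 : v ∈ {v : V | ∃ e ∈ E', v ∈ e} then some ⟨v, h2⟩ else none with hf
  have hval : ∀ w : {v : V | ∃ e ∈ E', v ∈ e}, f w.1 = some w := by
    intro w
    by_cases hc : w.1 ∈ p.support ∧ w.1 ≠ v₂
    · have hwv : w.1 = v₁ := by
        by_contra h
        exact S_disjoint_chainInt hp ⟨hc.1, h, hc.2⟩ w.2
      simp only [hf]
      rw [dif_pos hc]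
      exact congrArg some (Subtype.ext hwv.symm)
    · simp only [hf]
      rw [dif_neg hc, dif_pos w.2]
  refine ⟨f, ?_, ?_⟩
  · intro w
    by_cases h1 : w.1 = v₁
    · have hset : {v | f v = some w} = {v | v ∈ p.support ∧ v ≠ v₂} := by
        ext v
        simp only [Set.mem_setOf_eq, hf]
        split_ifs with hc hc2
        · constructor
          · intro _; exact hc
          · intro _; exact congrArg some (Subtype.ext h1.symm)
        · constructor
          · intro heq
            have hv : v = w.1 := congrArg Subtype.val (Option.some.inj heq) |>.symm ▸ rfl
            exfalso
            apply hc
            rw [hv, h1]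
            exact ⟨p.start_mem_support, hne⟩
          · intro hvp; exact absurd hvp hc
        · constructor
          · intro heq; exact absurd heq (by simp)
          · intro hvp; exact absurd hvp hc
      rw [hset]
      exact induce_support_front_connected hp
    · have hset : {v | f v = some w} = {w.1} := by
        ext v
        simp only [Set.mem_setOf_eq, Set.mem_singleton_iff, hf]
        split_ifs with hc hc2
        · constructor
          · intro heq
            have : v₁ = w.1 := congrArg Subtype.val (Option.some.inj heq)
            exact absurd this.symm h1
          · intro hv
            subst hv
            exact absurd w.2 (S_disjoint_chainInt hp ⟨hc.1, h1, hc.2⟩)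
        · constructor
          · intro heq
            exact (congrArg Subtype.val (Option.some.inj heq))
          · intro hv
            subst hv
            exact congrArg some (Subtype.ext rfl)
        · constructor
          · intro heq; exact absurd heq (by simp)
          · intro hv; subst hv; exact absurd w.2 hc2
      rw [hset]
      exact induce_singleton_connected G w.1
  · intro w₁ w₂ hadj
    have hadj' : (SimpleGraph.fromEdgeSet E').Adj w₁.1 w₂.1 := hadj
    obtain ⟨hmem, hne12⟩ := (SimpleGraph.fromEdgeSet_adj E').1 hadj'
    rcases hmem with ⟨heG, hep⟩ | hmem
    · exact ⟨w₁.1, w₂.1, hval w₁, hval w₂, (SimpleGraph.mem_edgeSet G).1 heG⟩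
    · rw [Set.mem_singleton_iff, Sym2.eq_iff] at hmem
      obtain ⟨u, hu, q, hq⟩ :=
        SimpleGraph.Walk.not_nil_iff.1
          (SimpleGraph.Walk.not_nil_of_ne (p := p.reverse) hne.symm)
      have hus : u ∈ p.support := by
        have : u ∈ p.reverse.support := by
          rw [hq, SimpleGraph.Walk.support_cons]
          exact List.mem_cons_of_mem _ q.start_mem_support
        rwa [SimpleGraph.Walk.support_reverse, List.mem_reverse] at this
      have hfu : f u = some ⟨v₁, hv₁S⟩ := by
        simp only [hf]
        rw [dif_pos ⟨hus, hu.ne'⟩]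
      rcases hmem with ⟨h1, h2⟩ | ⟨h1, h2⟩
      · refine ⟨u, v₂, ?_, ?_, hu.symm⟩
        · rw [hfu]; exact congrArg some (Subtype.ext h1.symm)
        · have := hval w₂; rwa [h2] at this
      · refine ⟨v₂, u, ?_, ?_, hu⟩
        · have := hval w₁; rwa [h1] at this
        · rw [hfu]; exact congrArg some (Subtype.ext h2.symm)

end Chain

/-- Replacing a chain of a biconnected outerplanar graph by the edge between
its endpoints yields a biconnected outerplanar graph. -/
theorem chain_replacement_biconnected_outerplanar [Fintype V] {G : SimpleGraph V}
    (hB : Biconnected G) (hO : Outerplanar G) (h3 : 3 ≤ Fintype.card V)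
    {v₁ v₂ : V} (p : G.Walk v₁ v₂) (hp : IsGraphChain G p) :
    Biconnected (graphOn ((G.edgeSet \ {e | e ∈ p.edges}) ∪ {s(v₁, v₂)})) ∧
    Outerplanar (graphOn ((G.edgeSet \ {e | e ∈ p.edges}) ∪ {s(v₁, v₂)})) := by
  classical
  haveI := Classical.decEq V
  have hne := chain_ne hp
  set E' : Set (Sym2 V) := (G.edgeSet \ {e | e ∈ p.edges}) ∪ {s(v₁, v₂)} with hE'
  have hE1 : ∀ e ∈ G.edgeSet, e ∉ p.edges → e ∈ E' := fun e he hnp => Or.inl ⟨he, hnp⟩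
  have hE2 : s(v₁, v₂) ∈ E' := Or.inr rfl
  have hv₁S : v₁ ∈ {v : V | ∃ e ∈ E', v ∈ e} :=
    ⟨s(v₁, v₂), hE2, Sym2.mem_mk_left _ _⟩
  have hv₂S : v₂ ∈ {v : V | ∃ e ∈ E', v ∈ e} :=
    ⟨s(v₁, v₂), hE2, Sym2.mem_mk_right _ _⟩
  have hconn : (graphOn E').Connected := by
    rw [SimpleGraph.connected_iff]
    refine ⟨?_, ⟨⟨v₁, hv₁S⟩⟩⟩
    intro x y
    obtain ⟨w⟩ := hB.1.preconnected x.1 y.1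
    obtain ⟨q, hq⟩ := lemmaA hp hE1 hE2 w.length w le_rfl
      (fun hi => S_disjoint_chainInt hp hi x.2)
      (fun hi => S_disjoint_chainInt hp hi y.2)
    exact walk_induce_reach q x.2 y.2 (support_walk_mem_S q x.2)
  refine ⟨⟨hconn, ?_⟩, ?_⟩
  · intro u hcut
    apply hcut.2
    rw [SimpleGraph.connected_iff]
    constructor
    · intro x y
      have hGu : (G.induce {w : V | w ≠ u.1}).Connected := by
        by_contra hnc
        exact hB.2 u.1 ⟨hB.1, hnc⟩
      have hx1 : x.1.1 ≠ u.1 := fun h => x.2 (Subtype.ext h)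
      have hy1 : y.1.1 ≠ u.1 := fun h => y.2 (Subtype.ext h)
      obtain ⟨w0⟩ := hGu.preconnected ⟨x.1.1, hx1⟩ ⟨y.1.1, hy1⟩
      obtain ⟨w', hw'⟩ := walk_of_induce w0
      obtain ⟨q, hq⟩ := lemmaA hp hE1 hE2 w'.length w' le_rfl
        (fun hi => S_disjoint_chainInt hp hi x.1.2)
        (fun hi => S_disjoint_chainInt hp hi y.1.2)
      refine walk_induce_induce_reach q x.1.2 x.2 y.1.2 y.2 ?_
      intro v hvq
      have hvS : v ∈ {v : V | ∃ e ∈ E', v ∈ e} := support_walk_mem_S q x.1.2 v hvq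
      refine ⟨hvS, ?_⟩
      have hvne : v ≠ u.1 := hw' v ((hq v hvq).1)
      intro h
      exact hvne (congrArg Subtype.val h)
    · by_cases hu : u = ⟨v₁, hv₁S⟩
      · refine ⟨⟨⟨v₂, hv₂S⟩, ?_⟩⟩
        rw [hu]
        intro h
        exact hne (congrArg Subtype.val h).symm
      · exact ⟨⟨⟨v₁, hv₁S⟩, fun h => hu h.symm⟩⟩
  · have hm : IsMinorOf (graphOn E') G := newG_minor hp
    have hcm := cone_minor hm
    exact ⟨fun h5 => hO.1 (IsMinorOf.trans h5 hcm),
           fun h33 => hO.2 (IsMinorOf.trans h33 hcm)⟩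
end

section
/- Let u be a vertex of degree greater than 2 in a biconnected outerplanar graph G. Then u is adjacent to at most two vertices of degree 2. -/
open SimpleGraph

universe u₁ u₂

variable {V : Type u₁} {W : Type u₂}

section Aux

variable {V : Type u₁}

/-- Transfer a walk whose support lies in `S` to reachability in the induced graph. -/
lemma reachable_induce_of_walk {G : SimpleGraph V} {S : Set V} {y : V} :
    ∀ {x : V} (p : G.Walk x y) (hx : x ∈ S) (hy : y ∈ S),
      (∀ z ∈ p.support, z ∈ S) → (G.induce S).Reachable ⟨x, hx⟩ ⟨y, hy⟩ := by
  intro x p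
  induction p with
  | nil => intro hx hy _; exact SimpleGraph.Reachable.refl _
  | @cons a b c h q ih =>
    intro hx hy hsup
    have hb : b ∈ S := hsup b (by simp [SimpleGraph.Walk.support_cons])
    have hadj : (G.induce S).Adj ⟨a, hx⟩ ⟨b, hb⟩ := h
    exact hadj.reachable.trans
      (ih hb hy (fun z hz => hsup z (by simp [SimpleGraph.Walk.support_cons, hz])))

/-- Project a reachability in an induced graph to a walk in `G` with support in `S`. -/
lemma walk_of_induce_s11 {G : SimpleGraph V} {S : Set V} {a b : ↥S}
    (h : (G.induce S).Reachable a b) :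
    ∃ p : G.Walk a.1 b.1, ∀ z ∈ p.support, z ∈ S := by
  obtain ⟨q⟩ := h
  refine ⟨q.map (SimpleGraph.Embedding.induce S).toHom, ?_⟩
  intro z hz
  erw [SimpleGraph.Walk.support_map] at hz
  obtain ⟨w, _, rfl⟩ := List.mem_map.mp hz
  exact w.2

lemma connected_induce_singleton (G : SimpleGraph V) (a : V) :
    (G.induce ({a} : Set V)).Connected := by
  rw [SimpleGraph.connected_iff]
  refine ⟨fun x y => ?_, ⟨⟨a, rfl⟩⟩⟩
  have : x = y := Subtype.ext ((Set.mem_singleton_iff.mp x.2).trans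
    (Set.mem_singleton_iff.mp y.2).symm)
  rw [this]

/-- A walk avoiding `u` between vertices not in `T` can be rerouted to also avoid `T`,
provided every vertex of `T` has at most one neighbour besides `u`. -/
lemma walk_avoid {G : SimpleGraph V} {u : V} {T : Set V}
    (hT : ∀ t ∈ T, ∀ a b : V, G.Adj t a → G.Adj t b → a ≠ u → b ≠ u → a = b)
    {y : V} (hy : y ∉ T) :
    ∀ (n : ℕ) {x : V} (p : G.Walk x y), p.length ≤ n → x ∉ T →
      (∀ z ∈ p.support, z ≠ u) →
      ∃ r : G.Walk x y, ∀ z ∈ r.support, z ≠ u ∧ z ∉ T := by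
  intro n
  induction n with
  | zero =>
    intro x p hlen hx hu'
    cases p with
    | nil =>
      refine ⟨SimpleGraph.Walk.nil, ?_⟩
      intro z hz
      simp only [SimpleGraph.Walk.support_nil, List.mem_singleton] at hz
      subst hz
      exact ⟨hu' z (by simp), hx⟩
    | cons h q => simp [SimpleGraph.Walk.length_cons] at hlen
  | succ m ih =>
    intro x p hlen hx hu'
    cases p with
    | nil =>
      refine ⟨SimpleGraph.Walk.nil, ?_⟩
      intro z hz
      simp only [SimpleGraph.Walk.support_nil, List.mem_singleton] at hz
      subst hz
      exact ⟨hu' z (by simp), hx⟩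
    | @cons _ a _ h q =>
      by_cases ha : a ∈ T
      · cases q with
        | nil => exact absurd ha hy
        | @cons _ b _ h2 q2 =>
          have hxu : x ≠ u := hu' x (by simp)
          have hbu : b ≠ u := hu' b (by simp [SimpleGraph.Walk.support_cons])
          have hxb : x = b := hT a ha x b h.symm h2 hxu hbu
          subst hxb
          refine ih q2 ?_ hx ?_
          · simp only [SimpleGraph.Walk.length_cons] at hlen
            omega
          · intro z hz
            exact hu' z (by simp only [SimpleGraph.Walk.support_cons, List.mem_cons]; tauto)
      · obtain ⟨r, hr⟩ := ih q
          (by simp only [SimpleGraph.Walk.length_cons] at hlen; omega) ha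
          (fun z hz => hu' z
            (by simp only [SimpleGraph.Walk.support_cons, List.mem_cons]; tauto))
        refine ⟨SimpleGraph.Walk.cons h r, ?_⟩
        intro z hz
        rw [SimpleGraph.Walk.support_cons] at hz
        rcases List.mem_cons.mp hz with rfl | hz
        · exact ⟨hu' z (by simp), hx⟩
        · exact hr z hz

/-- A walk starting in `{a, b}` and avoiding `u` stays in `{a, b}` when the only
neighbours of `a` are `u, b` and the only neighbours of `b` are `u, a`. -/
lemma walk_stay {G : SimpleGraph V} {u a b : V}
    (ha : ∀ c, G.Adj a c → c = u ∨ c = b) (hb : ∀ c, G.Adj b c → c = u ∨ c = a)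
    {y : V} : ∀ {x : V} (p : G.Walk x y), (x = a ∨ x = b) →
      (∀ z ∈ p.support, z ≠ u) → (y = a ∨ y = b) := by
  intro x p
  induction p with
  | nil => intro hx _; exact hx
  | @cons s c d h q ih =>
    intro hx hu'
    have hcu : c ≠ u := hu' c (by simp [SimpleGraph.Walk.support_cons])
    have hc : c = a ∨ c = b := by
      rcases hx with rfl | rfl
      · rcases ha c h with rfl | rfl
        · exact absurd rfl hcu
        · exact Or.inr rfl
      · rcases hb c h with rfl | rfl
        · exact absurd rfl hcu
        · exact Or.inl rfl
    exact ih hc (fun z hz => hu' z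
      (by simp only [SimpleGraph.Walk.support_cons, List.mem_cons]; tauto))

/-- If `v` has degree 2 and `p, q` are two distinct neighbours, every neighbour is one of them. -/
lemma nbhd_pair {G : SimpleGraph V} [Fintype V] {v p q : V}
    (h1 : G.Adj v p) (h2 : G.Adj v q) (hpq : p ≠ q) (hd : deg G v = 2) :
    ∀ c, G.Adj v c → c = p ∨ c = q := by
  have hfin : (G.neighborSet v).Finite := Set.toFinite _
  have hsub : ({p, q} : Set V) ⊆ G.neighborSet v := by
    intro c hc
    rcases hc with rfl | hc
    · exact h1
    · rw [Set.mem_singleton_iff] at hc; subst hc; exact h2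
  have heq : ({p, q} : Set V) = G.neighborSet v := by
    apply Set.eq_of_subset_of_ncard_le hsub _ hfin
    rw [Set.ncard_pair hpq]
    exact le_of_eq hd
  intro c hc
  have : c ∈ ({p, q} : Set V) := heq ▸ (hc : c ∈ G.neighborSet v)
  simpa using this

/-- From degree 2 and one neighbour `p`, extract the other neighbour. -/
lemma exists_other {G : SimpleGraph V} [Fintype V] {v p : V}
    (h : G.Adj v p) (hd : deg G v = 2) :
    ∃ w, G.Adj v w ∧ w ≠ p ∧ ∀ c, G.Adj v c → c = p ∨ c = w := by
  have h1 : 1 < (G.neighborSet v).ncard := by rw [show (G.neighborSet v).ncard = 2 from hd]; norm_num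
  obtain ⟨w, hw, hwp⟩ := Set.exists_ne_of_one_lt_ncard h1 p
  exact ⟨w, hw, hwp, nbhd_pair h hw (Ne.symm hwp) hd⟩

end Aux

/-- In a biconnected outerplanar graph, a vertex of degree greater than two
is adjacent to at most two vertices of degree two. -/
theorem adjacent_degree_two_le_two [Fintype V] {G : SimpleGraph V}
    (hB : Biconnected G) (hO : Outerplanar G) {u : V} (hu : 2 < deg G u) :
    ({v : V | G.Adj u v ∧ deg G v = 2}).ncard ≤ 2 := by
  classical
  by_contra hcon
  push_neg at hcon
  obtain ⟨v₁, hv₁, v₂, hv₂, v₃, hv₃, h12, h13, h23⟩ :=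
    (Set.two_lt_ncard (Set.toFinite _)).mp hcon
  obtain ⟨hA1, hd1⟩ := hv₁
  obtain ⟨hA2, hd2⟩ := hv₂
  obtain ⟨hA3, hd3⟩ := hv₃
  obtain ⟨hGc, hcut⟩ := hB
  have hv1u : v₁ ≠ u := hA1.ne'
  have hv2u : v₂ ≠ u := hA2.ne'
  have hv3u : v₃ ≠ u := hA3.ne'
  -- G - u is connected
  have hdel : (G.induce {x | x ≠ u}).Connected := by
    by_contra hnc
    exact hcut u ⟨hGc, hnc⟩
  -- the other neighbours of v₁, v₂, v₃
  obtain ⟨w₁, hw1adj, hw1u, hn1⟩ := exists_other hA1.symm hd1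
  obtain ⟨w₂, hw2adj, hw2u, hn2⟩ := exists_other hA2.symm hd2
  obtain ⟨w₃, hw3adj, hw3u, hn3⟩ := exists_other hA3.symm hd3
  -- no two degree-2 neighbours of u are adjacent (else u is a cut vertex)
  have hkey : ∀ a b c : V, G.Adj u a → deg G a = 2 → G.Adj u b → deg G b = 2 →
      G.Adj a b → G.Adj u c → c ≠ a → c ≠ b → False := by
    intro a b c hua hda hub hdb hab huc hca hcb
    have ha' : ∀ d, G.Adj a d → d = u ∨ d = b :=
      nbhd_pair hua.symm hab hub.ne hda
    have hb' : ∀ d, G.Adj b d → d = u ∨ d = a :=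
      nbhd_pair hub.symm hab.symm hua.ne hdb
    obtain ⟨p, hp⟩ := walk_of_induce_s11
      (hdel.preconnected ⟨a, hua.ne'⟩ ⟨c, huc.ne'⟩)
    have := walk_stay ha' hb' p (Or.inl rfl) (fun z hz => hp z hz)
    rcases this with rfl | rfl
    · exact hca rfl
    · exact hcb rfl
  -- hence each wᵢ avoids v₁, v₂, v₃
  have hw1v1 : w₁ ≠ v₁ := (G.ne_of_adj hw1adj).symm
  have hw2v2 : w₂ ≠ v₂ := (G.ne_of_adj hw2adj).symm
  have hw3v3 : w₃ ≠ v₃ := (G.ne_of_adj hw3adj).symm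
  have hw1v2 : w₁ ≠ v₂ := by
    rintro rfl; exact hkey v₁ w₁ v₃ hA1 hd1 hA2 hd2 hw1adj hA3 h13.symm h23.symm
  have hw1v3 : w₁ ≠ v₃ := by
    rintro rfl; exact hkey v₁ w₁ v₂ hA1 hd1 hA3 hd3 hw1adj hA2 h12.symm h23
  have hw2v1 : w₂ ≠ v₁ := by
    rintro rfl; exact hkey v₂ w₂ v₃ hA2 hd2 hA1 hd1 hw2adj hA3 h23.symm h13.symm
  have hw2v3 : w₂ ≠ v₃ := by
    rintro rfl; exact hkey v₂ w₂ v₁ hA2 hd2 hA3 hd3 hw2adj hA1 h12 h13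
  have hw3v1 : w₃ ≠ v₁ := by
    rintro rfl; exact hkey v₃ w₃ v₂ hA3 hd3 hA1 hd1 hw3adj hA2 h23 h12.symm
  have hw3v2 : w₃ ≠ v₂ := by
    rintro rfl; exact hkey v₃ w₃ v₁ hA3 hd3 hA2 hd2 hw3adj hA1 h13 h12
  -- the branch set B
  set B : Set V := {x | x ≠ u ∧ x ≠ v₁ ∧ x ≠ v₂ ∧ x ≠ v₃} with hBdef
  have hw1B : w₁ ∈ B := ⟨hw1u, hw1v1, hw1v2, hw1v3⟩
  have hw2B : w₂ ∈ B := ⟨hw2u, hw2v1, hw2v2, hw2v3⟩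
  have hw3B : w₃ ∈ B := ⟨hw3u, hw3v1, hw3v2, hw3v3⟩
  -- any two vertices of B are joined by a walk inside B
  have hBwalk : ∀ x y : V, x ∈ B → y ∈ B →
      ∃ p : G.Walk x y, ∀ z ∈ p.support, z ∈ B := by
    intro x y hxB hyB
    obtain ⟨p, hp⟩ := walk_of_induce_s11 (hdel.preconnected ⟨x, hxB.1⟩ ⟨y, hyB.1⟩)
    have hT : ∀ t ∈ ({v₁, v₂, v₃} : Set V),
        ∀ a b : V, G.Adj t a → G.Adj t b → a ≠ u → b ≠ u → a = b := by
      intro t ht a b hta htb hau hbu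
      rcases ht with rfl | rfl | rfl
      · rcases hn1 a hta with rfl | rfl
        · exact absurd rfl hau
        · rcases hn1 b htb with rfl | rfl
          · exact absurd rfl hbu
          · rfl
      · rcases hn2 a hta with rfl | rfl
        · exact absurd rfl hau
        · rcases hn2 b htb with rfl | rfl
          · exact absurd rfl hbu
          · rfl
      · rcases hn3 a hta with rfl | rfl
        · exact absurd rfl hau
        · rcases hn3 b htb with rfl | rfl
          · exact absurd rfl hbu
          · rfl
    have hyT : y ∉ ({v₁, v₂, v₃} : Set V) := by
      simp only [Set.mem_insert_iff, Set.mem_singleton_iff]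
      push_neg
      exact ⟨hyB.2.1, hyB.2.2.1, hyB.2.2.2⟩
    have hxT : x ∉ ({v₁, v₂, v₃} : Set V) := by
      simp only [Set.mem_insert_iff, Set.mem_singleton_iff]
      push_neg
      exact ⟨hxB.2.1, hxB.2.2.1, hxB.2.2.2⟩
    obtain ⟨r, hr⟩ := walk_avoid hT hyT p.length p le_rfl hxT (fun z hz => hp z hz)
    refine ⟨r, fun z hz => ?_⟩
    obtain ⟨hzu, hzT⟩ := hr z hz
    simp only [Set.mem_insert_iff, Set.mem_singleton_iff] at hzT
    push_neg at hzT
    exact ⟨hzu, hzT.1, hzT.2.1, hzT.2.2⟩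
  -- the cone homomorphism facts
  have hcone : ∀ a b : V, G.Adj a b → (cone G).Adj (some a) (some b) := by
    intro a b hab
    rw [cone, fromRel_adj]
    exact ⟨by simp [hab.ne], Or.inl (Or.inr ⟨a, b, rfl, rfl, hab⟩)⟩
  have hcnone : ∀ a : V, (cone G).Adj none (some a) := by
    intro a
    rw [cone, fromRel_adj]
    exact ⟨by simp, Or.inl (Or.inl rfl)⟩
  -- the branch map
  obtain ⟨-, hK33⟩ := hO
  apply hK33
  let f : Option V → Option (Fin 3 ⊕ Fin 3) := fun o =>
    o.elim (some (Sum.inl 0)) (fun x =>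
      if x = u then some (Sum.inl 1)
      else if x = v₁ then some (Sum.inr 0)
      else if x = v₂ then some (Sum.inr 1)
      else if x = v₃ then some (Sum.inr 2)
      else some (Sum.inl 2))
  have hf0 : f none = some (Sum.inl 0) := rfl
  have hfu : f (some u) = some (Sum.inl 1) := by simp [f]
  have hf1 : f (some v₁) = some (Sum.inr 0) := by simp [f, hv1u]
  have hf2 : f (some v₂) = some (Sum.inr 1) := by simp [f, hv2u, h12.symm]
  have hf3 : f (some v₃) = some (Sum.inr 2) := by simp [f, hv3u, h13.symm, h23.symm]
  have hfB : ∀ x, x ∈ B → f (some x) = some (Sum.inl 2) := by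
    intro x hx
    simp [f, hx.1, hx.2.1, hx.2.2.1, hx.2.2.2]
  have hfinv : ∀ (o : Option V) (w : Fin 3 ⊕ Fin 3), f o = some w →
      (o = none ∧ w = Sum.inl 0) ∨ (o = some u ∧ w = Sum.inl 1) ∨
      (o = some v₁ ∧ w = Sum.inr 0) ∨ (o = some v₂ ∧ w = Sum.inr 1) ∨
      (o = some v₃ ∧ w = Sum.inr 2) ∨
      (∃ x, x ∈ B ∧ o = some x ∧ w = Sum.inl 2) := by
    intro o w h
    cases o with
    | none =>
      left
      exact ⟨rfl, by rw [hf0] at h; exact (Option.some_inj.mp h).symm⟩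
    | some x =>
      by_cases h1 : x = u
      · subst h1
        right; left
        exact ⟨rfl, by rw [hfu] at h; exact (Option.some_inj.mp h).symm⟩
      · by_cases h2 : x = v₁
        · subst h2
          right; right; left
          exact ⟨rfl, by rw [hf1] at h; exact (Option.some_inj.mp h).symm⟩
        · by_cases h3 : x = v₂
          · subst h3
            right; right; right; left
            exact ⟨rfl, by rw [hf2] at h; exact (Option.some_inj.mp h).symm⟩
          · by_cases h4 : x = v₃
            · subst h4
              right; right; right; right; left
              exact ⟨rfl, by rw [hf3] at h; exact (Option.some_inj.mp h).symm⟩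
            · right; right; right; right; right
              refine ⟨x, ⟨h1, h2, h3, h4⟩, rfl, ?_⟩
              rw [hfB x ⟨h1, h2, h3, h4⟩] at h
              exact (Option.some_inj.mp h).symm
  refine ⟨f, ?_, ?_⟩
  · -- connectivity of the branch sets
    intro w
    have hsingle : ∀ (o : Option V), {v : Option V | f v = some w} = {o} →
        ((cone G).induce {v : Option V | f v = some w}).Connected := by
      intro o ho
      rw [ho]
      exact connected_induce_singleton _ o
    match w with
    | Sum.inl 0 =>
      apply hsingle none
      ext o
      simp only [Set.mem_setOf_eq, Set.mem_singleton_iff]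
      constructor
      · intro h
        rcases hfinv o _ h with ⟨h', _⟩ | ⟨_, h'⟩ | ⟨_, h'⟩ | ⟨_, h'⟩ | ⟨_, h'⟩ |
          ⟨x, _, _, h'⟩ <;> first | exact h' | exact absurd h' (by decide)
      · rintro rfl; exact hf0
    | Sum.inl 1 =>
      apply hsingle (some u)
      ext o
      simp only [Set.mem_setOf_eq, Set.mem_singleton_iff]
      constructor
      · intro h
        rcases hfinv o _ h with ⟨_, h'⟩ | ⟨h', _⟩ | ⟨_, h'⟩ | ⟨_, h'⟩ | ⟨_, h'⟩ |
          ⟨x, _, _, h'⟩ <;> first | exact h' | exact absurd h' (by decide)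
      · rintro rfl; exact hfu
    | Sum.inr 0 =>
      apply hsingle (some v₁)
      ext o
      simp only [Set.mem_setOf_eq, Set.mem_singleton_iff]
      constructor
      · intro h
        rcases hfinv o _ h with ⟨_, h'⟩ | ⟨_, h'⟩ | ⟨h', _⟩ | ⟨_, h'⟩ | ⟨_, h'⟩ |
          ⟨x, _, _, h'⟩ <;> first | exact h' | exact absurd h' (by decide)
      · rintro rfl; exact hf1
    | Sum.inr 1 =>
      apply hsingle (some v₂)
      ext o
      simp only [Set.mem_setOf_eq, Set.mem_singleton_iff]
      constructor
      · intro h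
        rcases hfinv o _ h with ⟨_, h'⟩ | ⟨_, h'⟩ | ⟨_, h'⟩ | ⟨h', _⟩ | ⟨_, h'⟩ |
          ⟨x, _, _, h'⟩ <;> first | exact h' | exact absurd h' (by decide)
      · rintro rfl; exact hf2
    | Sum.inr 2 =>
      apply hsingle (some v₃)
      ext o
      simp only [Set.mem_setOf_eq, Set.mem_singleton_iff]
      constructor
      · intro h
        rcases hfinv o _ h with ⟨_, h'⟩ | ⟨_, h'⟩ | ⟨_, h'⟩ | ⟨_, h'⟩ | ⟨h', _⟩ |
          ⟨x, _, _, h'⟩ <;> first | exact h' | exact absurd h' (by decide)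
      · rintro rfl; exact hf3
    | Sum.inl 2 =>
      -- the big branch set B
      have hmem : ∀ o : Option V, f o = some (Sum.inl 2) → ∃ x, x ∈ B ∧ o = some x := by
        intro o h
        rcases hfinv o _ h with ⟨_, h'⟩ | ⟨_, h'⟩ | ⟨_, h'⟩ | ⟨_, h'⟩ | ⟨_, h'⟩ |
          ⟨x, hx, rfl, _⟩
        · exact absurd h' (by decide)
        · exact absurd h' (by decide)
        · exact absurd h' (by decide)
        · exact absurd h' (by decide)
        · exact absurd h' (by decide)
        · exact ⟨x, hx, rfl⟩
      rw [SimpleGraph.connected_iff]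
      constructor
      · rintro ⟨o1, ho1⟩ ⟨o2, ho2⟩
        obtain ⟨x, hxB, rfl⟩ := hmem o1 ho1
        obtain ⟨y, hyB, rfl⟩ := hmem o2 ho2
        obtain ⟨p, hp⟩ := hBwalk x y hxB hyB
        let φ : G →g cone G := ⟨some, fun {a b} h => hcone a b h⟩
        have hq := p.map φ
        have hsup : ∀ z ∈ (p.map φ).support, z ∈ {v : Option V | f v = some (Sum.inl 2)} := by
          intro z hz
          rw [SimpleGraph.Walk.support_map] at hz
          obtain ⟨s, hs, rfl⟩ := List.mem_map.mp hz
          exact hfB s (hp s hs)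
        exact reachable_induce_of_walk (p.map φ) ho1 ho2 hsup
      · exact ⟨⟨some w₁, hfB w₁ hw1B⟩⟩
  · -- edges of K₃,₃ are realized
    have key : ∀ i j : Fin 3, ∃ a b : Option V,
        f a = some (Sum.inl i) ∧ f b = some (Sum.inr j) ∧ (cone G).Adj a b := by
      have hv : ∀ j : Fin 3, ∃ b : V, f (some b) = some (Sum.inr j) ∧
          G.Adj u b ∧ ∃ w, w ∈ B ∧ G.Adj w b := by
        intro j
        fin_cases j
        · exact ⟨v₁, hf1, hA1, w₁, hw1B, hw1adj.symm⟩
        · exact ⟨v₂, hf2, hA2, w₂, hw2B, hw2adj.symm⟩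
        · exact ⟨v₃, hf3, hA3, w₃, hw3B, hw3adj.symm⟩
      intro i j
      obtain ⟨b, hfb, hub, w, hwB, hwb⟩ := hv j
      fin_cases i
      · exact ⟨none, some b, hf0, hfb, hcnone b⟩
      · exact ⟨some u, some b, hfu, hfb, hcone u b hub⟩
      · exact ⟨some w, some b, hfB w hwB, hfb, hcone w b hwb⟩
    rintro (i | i) (j | j) hadj
    · simp at hadj
    · obtain ⟨a, b, ha, hb, hab⟩ := key i j
      exact ⟨a, b, ha, hb, hab⟩
    · obtain ⟨a, b, ha, hb, hab⟩ := key j i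
      exact ⟨b, a, hb, ha, hab.symm⟩
    · simp at hadj
end
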